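/- arXiv:2310.06808 — 6 statements merged into one kernel-verified Lean document; each statement's English description precedes it below -/
import Mathlib

section
/- Let a, b, c, d be positive real numbers with bc > ad, and define the odds ratio OR = (bc)/(ad) and the phi (Pearson) correlation coefficient r = (bc - ad)/sqrt((a+c)(b+d)(a+b)(c+d)). Then r ≤ (sqrt(OR) - 1)/(sqrt(OR) + 1). -/
theorem stmt_0 (a b c d : ℝ) (ha : 0 < a) (hb : 0 < b) (hc : 0 < c) (hd : 0 < d)
    (h : a * d < b * c) :
    (b * c - a * d) / Real.sqrt ((a + c) * (b + d) * (a + b) * (c + d)) ≤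
      (Real.sqrt ((b * c) / (a * d)) - 1) / (Real.sqrt ((b * c) / (a * d)) + 1) := by
  have had : (0:ℝ) < a * d := by positivity
  have hbc : (0:ℝ) < b * c := by positivity
  set u := Real.sqrt (a * d) with hu
  set v := Real.sqrt (b * c) with hv
  have hu0 : 0 < u := Real.sqrt_pos.mpr had
  have hv0 : 0 < v := Real.sqrt_pos.mpr hbc
  have hu2 : u ^ 2 = a * d := Real.sq_sqrt had.le
  have hv2 : v ^ 2 = b * c := Real.sq_sqrt hbc.le
  have huv : u < v := Real.sqrt_lt_sqrt had.le h
  have hRHS : (Real.sqrt ((b * c) / (a * d)) - 1) / (Real.sqrt ((b * c) / (a * d)) + 1)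
      = (v - u) / (v + u) := by
    rw [Real.sqrt_div hbc.le]
    rw [← hu, ← hv]
    field_simp
  rw [hRHS]
  -- key product inequality
  have hmul : u * v = Real.sqrt (a * c) * Real.sqrt (b * d) := by
    rw [hu, hv, ← Real.sqrt_mul had.le, ← Real.sqrt_mul (by positivity : (0:ℝ) ≤ a * c)]
    ring_nf
  have hmul2 : u * v = Real.sqrt (a * b) * Real.sqrt (c * d) := by
    rw [hu, hv, ← Real.sqrt_mul had.le, ← Real.sqrt_mul (by positivity : (0:ℝ) ≤ a * b)]
    ring_nf
  have hac : Real.sqrt (a * c) ^ 2 = a * c := Real.sq_sqrt (by positivity)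
  have hbd : Real.sqrt (b * d) ^ 2 = b * d := Real.sq_sqrt (by positivity)
  have hab : Real.sqrt (a * b) ^ 2 = a * b := Real.sq_sqrt (by positivity)
  have hcd : Real.sqrt (c * d) ^ 2 = c * d := Real.sq_sqrt (by positivity)
  have e1 : 0 ≤ a * c + b * d - 2 * (u * v) := by
    nlinarith [sq_nonneg (Real.sqrt (a * c) - Real.sqrt (b * d)), hac, hbd, hmul]
  have e2 : 0 ≤ a * b + c * d - 2 * (u * v) := by
    nlinarith [sq_nonneg (Real.sqrt (a * b) - Real.sqrt (c * d)), hab, hcd, hmul2]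
  have f1 : (u + v) ^ 2 ≤ (a + b) * (c + d) := by nlinarith [e1, hu2, hv2]
  have f2 : (u + v) ^ 2 ≤ (a + c) * (b + d) := by nlinarith [e2, hu2, hv2]
  have hsq : ((u + v) ^ 2) ^ 2 ≤ (a + c) * (b + d) * ((a + b) * (c + d)) := by
    calc ((u + v) ^ 2) ^ 2 = (u + v) ^ 2 * (u + v) ^ 2 := by ring
      _ ≤ (a + c) * (b + d) * ((a + b) * (c + d)) :=
        mul_le_mul f2 f1 (by positivity) (by positivity)
  have key : (u + v) ^ 2 ≤ Real.sqrt ((a + c) * (b + d) * (a + b) * (c + d)) := by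
    rw [show (a + c) * (b + d) * (a + b) * (c + d) = (a + c) * (b + d) * ((a + b) * (c + d)) by ring]
    exact Real.le_sqrt' (by positivity) |>.mpr hsq
  have hP0 : 0 < Real.sqrt ((a + c) * (b + d) * (a + b) * (c + d)) :=
    Real.sqrt_pos.mpr (by positivity)
  have step : (b * c - a * d) / Real.sqrt ((a + c) * (b + d) * (a + b) * (c + d))
      ≤ (b * c - a * d) / (u + v) ^ 2 := by
    apply div_le_div_of_nonneg_left (by linarith) (by positivity) key
  refine step.trans (le_of_eq ?_)
  rw [← hu2, ← hv2]
  field_simp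
  ring
end

section
/- Let p00, p10, p01, p11 ∈ (0,1) be conditional probabilities P(Y=1 | X=x, W=w) and let q00, q10, q01, q11 > 0 be the joint probabilities P(X=x, W=w). Define SS(β0, βX, βW) = q00·(p00(1−β0)² + (1−p00)β0²) + q10·(p10(1−β0−βX)² + (1−p10)(β0+βX)²) + q01·(p01(1−β0−βW)² + (1−p01)(β0+βW)²) + q11·(p11(1−β0−βX−βW)² + (1−p11)(β0+βX+βW)²). If p00 > p10 and p01 > p11 (Strong Simpson's Paradox), then any global minimizer (β0*, βX*, βW*) of SS over ℝ³ satisfies βX* < 0. -/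
private lemma grad_zero (s E : ℝ) (hs : 0 < s) (h : ∀ t : ℝ, 0 ≤ 2*t*E + t^2*s) : E = 0 := by
  have h1 := h (-E/s)
  have h2 : (-E/s) * s = -E := by field_simp
  nlinarith [sq_nonneg E, h1, h2]

theorem stmt_6 (p00 p10 p01 p11 q00 q10 q01 q11 : ℝ)
    (hp00 : p00 ∈ Set.Ioo (0:ℝ) 1) (hp10 : p10 ∈ Set.Ioo (0:ℝ) 1)
    (hp01 : p01 ∈ Set.Ioo (0:ℝ) 1) (hp11 : p11 ∈ Set.Ioo (0:ℝ) 1)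
    (hq00 : 0 < q00) (hq10 : 0 < q10) (hq01 : 0 < q01) (hq11 : 0 < q11)
    (h1 : p10 < p00) (h2 : p11 < p01)
    (SS : ℝ → ℝ → ℝ → ℝ)
    (hSS : ∀ β0 βX βW, SS β0 βX βW =
      q00 * (p00 * (1 - β0) ^ 2 + (1 - p00) * β0 ^ 2) +
      q10 * (p10 * (1 - β0 - βX) ^ 2 + (1 - p10) * (β0 + βX) ^ 2) +
      q01 * (p01 * (1 - β0 - βW) ^ 2 + (1 - p01) * (β0 + βW) ^ 2) +
      q11 * (p11 * (1 - β0 - βX - βW) ^ 2 + (1 - p11) * (β0 + βX + βW) ^ 2))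
    (β0 βX βW : ℝ) (hmin : ∀ b0 bx bw, SS β0 βX βW ≤ SS b0 bx bw) :
    βX < 0 := by
  have hE0 : q00*(β0-p00)+q10*(β0+βX-p10)+q01*(β0+βW-p01)+q11*(β0+βX+βW-p11) = 0 := by
    apply grad_zero (q00+q10+q01+q11) _ (by linarith)
    intro t
    have h := hmin (β0+t) βX βW
    rw [hSS, hSS] at h
    nlinarith [h]
  have hEX : q10*(β0+βX-p10)+q11*(β0+βX+βW-p11) = 0 := by
    apply grad_zero (q10+q11) _ (by linarith)
    intro t
    have h := hmin β0 (βX+t) βW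
    rw [hSS, hSS] at h
    nlinarith [h]
  have hEW : q01*(β0+βW-p01)+q11*(β0+βX+βW-p11) = 0 := by
    apply grad_zero (q01+q11) _ (by linarith)
    intro t
    have h := hmin β0 βX (βW+t)
    rw [hSS, hSS] at h
    nlinarith [h]
  set t := q11*(β0+βX+βW-p11) with ht
  have hr10 : q10*(β0+βX-p10) = -t := by linarith
  have hr01 : q01*(β0+βW-p01) = -t := by linarith
  have hr00 : q00*(β0-p00) = t := by linarith
  rcases le_or_gt 0 t with hcase | hcase
  · -- q00*q10*βX = q00*(q10 r10) - q10*(q00 r00) - q00*q10*(p00-p10)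
    have key : q00*q10*βX = -(q00+q10)*t - q00*q10*(p00-p10) := by
      linear_combination q00 * hr10 - q10 * hr00
    nlinarith [mul_pos hq00 hq10, mul_pos (mul_pos hq00 hq10) (sub_pos.mpr h1)]
  · have key : q01*q11*βX = (q01+q11)*t - q01*q11*(p01-p11) := by
      linear_combination q11 * ht - q11 * hr01
    nlinarith [mul_pos hq01 hq11, mul_pos (mul_pos hq01 hq11) (sub_pos.mpr h2)]
end

section
/- With r = 0.0328 and OR_WY = 1.4: f(1.4) = (sqrt(1.4)−1)/(sqrt(1.4)+1) and the Odds Ratio Condition f(OR_WX)·f(1.4) > 0.0328 requires OR_WX > ((1 + 0.0328/f(1.4))/(1 − 0.0328/f(1.4)))², and this threshold exceeds 5. -/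
theorem stmt_14 :
    let f : ℝ → ℝ := fun t => (Real.sqrt t - 1) / (Real.sqrt t + 1)
    (∀ ORWX > (1:ℝ), f ORWX * f 1.4 > 0.0328 →
        ORWX > ((1 + 0.0328 / f 1.4) / (1 - 0.0328 / f 1.4)) ^ 2) ∧
      ((1 + 0.0328 / f 1.4) / (1 - 0.0328 / f 1.4)) ^ 2 > 5 := by
  intro f
  have h2 : (Real.sqrt 1.4) ^ 2 = 1.4 := Real.sq_sqrt (by norm_num)
  set s := Real.sqrt 1.4 with hs
  have hs1 : (1:ℝ) < s := by nlinarith [Real.sqrt_nonneg (1.4:ℝ)]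
  have hsp : (0:ℝ) < s + 1 := by linarith
  have hsm : (0:ℝ) < s - 1 := by linarith
  have hf : f 1.4 = (s - 1) / (s + 1) := rfl
  have hP : (0:ℝ) < 0.9672 * s - 1.0328 := by nlinarith
  have hQ : (0:ℝ) < 1.0328 * s - 0.9672 := by nlinarith
  have e1 : (1 + 0.0328 / f 1.4) / (1 - 0.0328 / f 1.4)
      = (1.0328 * s - 0.9672) / (0.9672 * s - 1.0328) := by
    rw [hf]
    have hnum : 1 + 0.0328 / ((s - 1) / (s + 1)) = (1.0328 * s - 0.9672) / (s - 1) := by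
      field_simp
      ring
    have hden : 1 - 0.0328 / ((s - 1) / (s + 1)) = (0.9672 * s - 1.0328) / (s - 1) := by
      field_simp
      ring
    rw [hnum, hden]
    rw [div_div_div_comm]
    rw [div_self (ne_of_gt hsm), div_one]
  constructor
  · intro x hx hcond
    have hux2 : Real.sqrt x ^ 2 = x := Real.sq_sqrt (by linarith)
    set u := Real.sqrt x with hu
    have hu1 : (1:ℝ) < u := by nlinarith [Real.sqrt_nonneg x]
    have hfx : f x = (u - 1) / (u + 1) := rfl
    rw [hfx, hf] at hcond
    have key : (u - 1) * (s - 1) > 0.0328 * ((u + 1) * (s + 1)) := by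
      rw [div_mul_div_comm, gt_iff_lt, lt_div_iff₀ (by positivity)] at hcond
      linarith
    rw [e1, gt_iff_lt, div_pow, div_lt_iff₀ (by positivity)]
    have keyPQ : (1.0328 * s - 0.9672) < u * (0.9672 * s - 1.0328) := by
      nlinarith [key]
    nlinarith [keyPQ, hP, hQ, mul_pos hP hQ, sq_nonneg (u * (0.9672 * s - 1.0328) - (1.0328 * s - 0.9672))]
  · rw [e1, gt_iff_lt, div_pow, lt_div_iff₀ (by positivity)]
    nlinarith [h2, hs1]
end

section
/- If the Risk Ratio Condition holds, i.e. R1·R2/(R1 + R2 − 1) > R for reals R1, R2 > 1 and R > 1, then the Cornfield Condition holds: min(R1, R2) > R. -/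
theorem stmt_17 (R1 R2 R : ℝ) (h1 : 1 < R1) (h2 : 1 < R2) (hR : 1 < R)
    (h : R1 * R2 / (R1 + R2 - 1) > R) :
    min R1 R2 > R := by
  have hd : 0 < R1 + R2 - 1 := by linarith
  have h' : R * (R1 + R2 - 1) < R1 * R2 := (lt_div_iff₀ hd).mp h
  rw [gt_iff_lt, lt_min_iff]
  constructor <;> nlinarith
end

section
/- For a 2×2 table with positive cell probabilities, the phi coefficient r satisfies −(sqrt(OR')−1)/(sqrt(OR')+1) ≤ r whenever r < 0, where OR' = 1/OR > 1 is the reciprocal odds ratio; equivalently, for all positive a, b, c, d: |bc − ad|/sqrt((a+c)(b+d)(a+b)(c+d)) ≤ |sqrt(bc) − sqrt(ad)|/(sqrt(bc) + sqrt(ad)). -/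
theorem stmt_18 (a b c d : ℝ) (ha : 0 < a) (hb : 0 < b) (hc : 0 < c) (hd : 0 < d) :
    (((b * c - a * d) / Real.sqrt ((a + c) * (b + d) * (a + b) * (c + d)) < 0 →
        -((Real.sqrt ((a * d) / (b * c)) - 1) / (Real.sqrt ((a * d) / (b * c)) + 1)) ≤
          (b * c - a * d) / Real.sqrt ((a + c) * (b + d) * (a + b) * (c + d)))) ∧
      |b * c - a * d| / Real.sqrt ((a + c) * (b + d) * (a + b) * (c + d)) ≤
        |Real.sqrt (b * c) - Real.sqrt (a * d)| / (Real.sqrt (b * c) + Real.sqrt (a * d)) := by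
  set S := Real.sqrt (b * c) with hSdef
  set T := Real.sqrt (a * d) with hTdef
  set P := (a + c) * (b + d) * (a + b) * (c + d) with hPdef
  have hS : 0 < S := Real.sqrt_pos.mpr (by positivity)
  have hT : 0 < T := Real.sqrt_pos.mpr (by positivity)
  have hS2 : S ^ 2 = b * c := Real.sq_sqrt (by positivity)
  have hT2 : T ^ 2 = a * d := Real.sq_sqrt (by positivity)
  have hPpos : 0 < P := by positivity
  -- key: (S+T)^4 ≤ P
  have hu2 : Real.sqrt (a * b) ^ 2 = a * b := Real.sq_sqrt (by positivity)
  have hv2 : Real.sqrt (c * d) ^ 2 = c * d := Real.sq_sqrt (by positivity)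
  have hw2 : Real.sqrt (a * c) ^ 2 = a * c := Real.sq_sqrt (by positivity)
  have hx2 : Real.sqrt (b * d) ^ 2 = b * d := Real.sq_sqrt (by positivity)
  have huv : Real.sqrt (a * b) * Real.sqrt (c * d) = S * T := by
    rw [hSdef, hTdef, ← Real.sqrt_mul (by positivity), ← Real.sqrt_mul (by positivity)]
    ring_nf
  have hwx : Real.sqrt (a * c) * Real.sqrt (b * d) = S * T := by
    rw [hSdef, hTdef, ← Real.sqrt_mul (by positivity), ← Real.sqrt_mul (by positivity)]
    ring_nf
  have hab : 2 * (S * T) ≤ a * b + c * d := by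
    nlinarith [sq_nonneg (Real.sqrt (a * b) - Real.sqrt (c * d))]
  have hac : 2 * (S * T) ≤ a * c + b * d := by
    nlinarith [sq_nonneg (Real.sqrt (a * c) - Real.sqrt (b * d))]
  have hkey : (S + T) ^ 4 ≤ P := by
    have : (S ^ 2 + T ^ 2 + 2 * (S * T)) * (S ^ 2 + T ^ 2 + 2 * (S * T)) ≤
        (a * b + c * d + S ^ 2 + T ^ 2) * (a * c + b * d + S ^ 2 + T ^ 2) := by
      have h1 : 0 < S ^ 2 + T ^ 2 + 2 * (S * T) := by positivity
      nlinarith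
    calc (S + T) ^ 4 = (S ^ 2 + T ^ 2 + 2 * (S * T)) * (S ^ 2 + T ^ 2 + 2 * (S * T)) := by ring
      _ ≤ (a * b + c * d + S ^ 2 + T ^ 2) * (a * c + b * d + S ^ 2 + T ^ 2) := this
      _ = P := by rw [hS2, hT2, hPdef]; ring
  have hD : (S + T) ^ 2 ≤ Real.sqrt P := by
    have := Real.sqrt_le_sqrt hkey
    rwa [show (S + T) ^ 4 = ((S + T) ^ 2) ^ 2 by ring, Real.sqrt_sq (by positivity)] at this
  have hDpos : 0 < Real.sqrt P := Real.sqrt_pos.mpr hPpos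
  have hST : 0 < S + T := by linarith
  have hmain : |b * c - a * d| / Real.sqrt P ≤ |S - T| / (S + T) := by
    have habs : |b * c - a * d| = |S - T| * (S + T) := by
      rw [← hS2, ← hT2, show S ^ 2 - T ^ 2 = (S - T) * (S + T) by ring, abs_mul,
        abs_of_pos hST]
    rw [habs]
    calc |S - T| * (S + T) / Real.sqrt P ≤ |S - T| * (S + T) / (S + T) ^ 2 := by
          apply div_le_div_of_nonneg_left (by positivity) (by positivity) hD
      _ = |S - T| / (S + T) := by field_simp
  refine ⟨fun hneg => ?_, hmain⟩
  have hba : b * c - a * d < 0 := by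
    by_contra h
    push_neg at h
    exact absurd (div_nonneg (by linarith) hDpos.le) (not_le.mpr hneg)
  have hTS : S < T := Real.sqrt_lt_sqrt (by positivity) (by linarith)
  have hOR : Real.sqrt ((a * d) / (b * c)) = T / S := Real.sqrt_div (by positivity) _
  have htarget : -((T / S - 1) / (T / S + 1)) = (S - T) / (S + T) := by
    have h1 : T / S - 1 = (T - S) / S := by field_simp
    have h2 : T / S + 1 = (S + T) / S := by field_simp; ring
    rw [h1, h2, div_div_div_cancel_right₀]
    · ring
    · exact hS.ne'
  have h2 : (a * d - b * c) / Real.sqrt P ≤ (T - S) / (S + T) := by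
    have := hmain
    rwa [abs_of_neg hba, abs_of_neg (by linarith : S - T < 0), neg_sub, neg_sub] at this
  rw [hOR, htarget]
  have : (S - T) / (S + T) = -((T - S) / (S + T)) := by ring
  rw [this]
  have : (b * c - a * d) / Real.sqrt P = -((a * d - b * c) / Real.sqrt P) := by ring
  rw [this]
  linarith
end

section
/- If p00 > p10 and p01 > p11 with all four numbers in (0,1), and β0, βX, βW are reals with βX ≥ 0 such that β0 ∈ [p10, p00] or β0 + βX ∈ [p10, p00], and β0 + βW ∈ [p11, p01] or β0 + βX + βW ∈ [p11, p01], then there exists ε > 0 and a perturbation of (β0, βX, βW) with strictly smaller value of SS (the weighted sum of squares with any fixed positive weights q00, q10, q01, q11); hence no point with βX ≥ 0 is a local minimum of SS. -/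
set_option maxHeartbeats 4000000



private lemma SS_aux_bound (t a b c δ : ℝ) (ht : 0 < t)
    (ht1 : t * (2 * (a + b + c) + 2) ≤ δ)
    (ha : 0 ≤ a) (hb : 0 ≤ b) (hc : 0 ≤ c) : t * a < δ := by
  nlinarith [mul_nonneg ht.le hb, mul_nonneg ht.le hc]

private lemma SS_aux_dec (t N M S : ℝ) (ht : 0 < t) (hN : 0 < N) (hM : 0 ≤ M)
    (ht2 : t * (M + 1) ≤ N) : S - 2 * t * N + t ^ 2 * M < S := by
  nlinarith [mul_le_mul_of_nonneg_left ht2 ht.le, mul_pos ht hN, mul_pos ht ht]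

theorem stmt_19 (p00 p10 p01 p11 q00 q10 q01 q11 : ℝ)
    (hp00 : p00 ∈ Set.Ioo (0:ℝ) 1) (hp10 : p10 ∈ Set.Ioo (0:ℝ) 1)
    (hp01 : p01 ∈ Set.Ioo (0:ℝ) 1) (hp11 : p11 ∈ Set.Ioo (0:ℝ) 1)
    (hq00 : 0 < q00) (hq10 : 0 < q10) (hq01 : 0 < q01) (hq11 : 0 < q11)
    (h1 : p10 < p00) (h2 : p11 < p01)
    (SS : ℝ → ℝ → ℝ → ℝ)
    (hSS : ∀ β0 βX βW, SS β0 βX βW =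
      q00 * (p00 * (1 - β0) ^ 2 + (1 - p00) * β0 ^ 2) +
      q10 * (p10 * (1 - β0 - βX) ^ 2 + (1 - p10) * (β0 + βX) ^ 2) +
      q01 * (p01 * (1 - β0 - βW) ^ 2 + (1 - p01) * (β0 + βW) ^ 2) +
      q11 * (p11 * (1 - β0 - βX - βW) ^ 2 + (1 - p11) * (β0 + βX + βW) ^ 2))
    (β0 βX βW : ℝ) (hβX : 0 ≤ βX)
    (hfit1 : β0 ∈ Set.Icc p10 p00 ∨ β0 + βX ∈ Set.Icc p10 p00)
    (hfit2 : β0 + βW ∈ Set.Icc p11 p01 ∨ β0 + βX + βW ∈ Set.Icc p11 p01) :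
    ∀ δ > 0, ∃ b0 bx bw : ℝ,
      |b0 - β0| < δ ∧ |bx - βX| < δ ∧ |bw - βW| < δ ∧
      SS b0 bx bw < SS β0 βX βW := by
  intro δ hδ
  set r1 := q00 * (β0 - p00) with hr1
  set r2 := q10 * (β0 + βX - p10) with hr2
  set r3 := q01 * (β0 + βW - p01) with hr3
  set r4 := q11 * (β0 + βX + βW - p11) with hr4
  set u0 := r1 + r2 + r3 + r4 with hu0
  set uX := r2 + r4 with huX
  set uW := r3 + r4 with huW
  set N := u0 ^ 2 + uX ^ 2 + uW ^ 2 with hNdef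
  set M := q00 * u0 ^ 2 + q10 * (u0 + uX) ^ 2 + q01 * (u0 + uW) ^ 2 +
    q11 * (u0 + uX + uW) ^ 2 with hMdef
  -- N > 0 : gradient is nonzero
  have hNpos : 0 < N := by
    rcases lt_or_ge 0 N with h | hle
    · exact h
    exfalso
    rw [hNdef] at hle
    have h0 : u0 = 0 := by
      have h : u0 ^ 2 = 0 :=
        le_antisymm (by nlinarith [sq_nonneg uX, sq_nonneg uW]) (sq_nonneg u0)
      exact (pow_eq_zero_iff two_ne_zero).mp h
    have hX : uX = 0 := by
      have h : uX ^ 2 = 0 :=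
        le_antisymm (by nlinarith [sq_nonneg u0, sq_nonneg uW]) (sq_nonneg uX)
      exact (pow_eq_zero_iff two_ne_zero).mp h
    have hW : uW = 0 := by
      have h : uW ^ 2 = 0 :=
        le_antisymm (by nlinarith [sq_nonneg u0, sq_nonneg uX]) (sq_nonneg uW)
      exact (pow_eq_zero_iff two_ne_zero).mp h
    rw [hu0] at h0
    rw [huX] at hX
    rw [huW] at hW
    -- so r2 = -r4, r3 = -r4, r1 = r4
    rcases lt_trichotomy r4 0 with h | h | h
    · -- r3 = -r4 > 0 gives β0+βW > p01 ; r4 < 0 gives β0+βX+βW < p11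
      have hr3pos : 0 < r3 := by linarith
      have hc : p01 < β0 + βW := by
        by_contra hcon
        push_neg at hcon
        nlinarith [mul_nonneg hq01.le (sub_nonneg.mpr hcon)]
      have hd : β0 + βX + βW < p11 := by
        by_contra hcon
        push_neg at hcon
        nlinarith [mul_nonneg hq11.le (sub_nonneg.mpr hcon)]
      rcases hfit2 with hf | hf
      · exact absurd hf.2 (by linarith)
      · exact absurd hf.1 (by linarith)
    · -- all residuals zero: β0 = p00, β0+βX = p10, contradiction with βX ≥ 0
      have hr2z : r2 = 0 := by linarith
      have hr1z : r1 = 0 := by linarith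
      have ha : β0 = p00 := by
        have := (mul_eq_zero.mp hr1z).resolve_left hq00.ne'
        linarith
      have hb : β0 + βX = p10 := by
        have := (mul_eq_zero.mp hr2z).resolve_left hq10.ne'
        linarith
      linarith
    · -- r1 = r4 > 0 gives β0 > p00; r2 = -r4 < 0 gives β0+βX < p10
      have hr1pos : 0 < r1 := by linarith
      have hr2neg : r2 < 0 := by linarith
      have ha : p00 < β0 := by
        by_contra hcon
        push_neg at hcon
        nlinarith [mul_nonneg hq00.le (sub_nonneg.mpr hcon)]
      have hb : β0 + βX < p10 := by
        by_contra hcon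
        push_neg at hcon
        nlinarith [mul_nonneg hq10.le (sub_nonneg.mpr hcon)]
      linarith
  have hM : 0 ≤ M := by
    rw [hMdef]
    nlinarith [mul_nonneg hq00.le (sq_nonneg u0), mul_nonneg hq10.le (sq_nonneg (u0 + uX)),
      mul_nonneg hq01.le (sq_nonneg (u0 + uW)), mul_nonneg hq11.le (sq_nonneg (u0 + uX + uW))]
  have hDpos : (0:ℝ) < 2 * (|u0| + |uX| + |uW|) + 2 := by positivity
  set t := min (δ / (2 * (|u0| + |uX| + |uW|) + 2)) (N / (M + 1)) with htdef
  have ht : 0 < t := lt_min (div_pos hδ hDpos) (div_pos hNpos (by linarith))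
  have ht1 : t * (2 * (|u0| + |uX| + |uW|) + 2) ≤ δ :=
    (le_div_iff₀ hDpos).mp (min_le_left _ _)
  have ht2 : t * (M + 1) ≤ N := (le_div_iff₀ (by linarith)).mp (min_le_right _ _)
  refine ⟨β0 - t * u0, βX - t * uX, βW - t * uW, ?_, ?_, ?_, ?_⟩
  · have e : β0 - t * u0 - β0 = -(t * u0) := by ring
    rw [e, abs_neg, abs_mul, abs_of_pos ht]
    exact SS_aux_bound t |u0| |uX| |uW| δ ht ht1 (abs_nonneg _) (abs_nonneg _) (abs_nonneg _)
  · have e : βX - t * uX - βX = -(t * uX) := by ring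
    rw [e, abs_neg, abs_mul, abs_of_pos ht]
    exact SS_aux_bound t |uX| |u0| |uW| δ ht (by linarith [ht1]) (abs_nonneg _) (abs_nonneg _) (abs_nonneg _)
  · have e : βW - t * uW - βW = -(t * uW) := by ring
    rw [e, abs_neg, abs_mul, abs_of_pos ht]
    exact SS_aux_bound t |uW| |u0| |uX| δ ht (by linarith [ht1]) (abs_nonneg _) (abs_nonneg _) (abs_nonneg _)
  · have key : SS (β0 - t * u0) (βX - t * uX) (βW - t * uW) =
        SS β0 βX βW - 2 * t * N + t ^ 2 * M := by
      rw [hSS, hSS]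
      simp only [hNdef, hMdef, hu0, huX, huW, hr1, hr2, hr3, hr4]
      ring
    rw [key]
    exact SS_aux_dec t N M (SS β0 βX βW) ht hNpos hM ht2
end
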